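/- Let y : [0, ∞) → (0, ∞) be a positive absolutely continuous function and let l > 1, θ > 0, η ≥ 0 be real numbers such that y′(t) + θ y(t)^l ≤ η for almost every t ≥ 0. Then for every t > 0 one has y(t) ≤ (η/θ)^{1/l} + (θ (l−1) t)^{−1/(l−1)}. -/
import Mathlib


open MeasureTheory Set Filter
open scoped ENNReal Topology

noncomputable section

private lemma aux_rpow_add {a b p : ℝ} (ha : 0 ≤ a) (hb : 0 ≤ b) (hp : 1 ≤ p) :
    a ^ p + b ^ p ≤ (a + b) ^ p := by
  have hp0 : (0:ℝ) < p := lt_of_lt_of_le one_pos hp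
  have key : ∀ x z : ℝ, 0 ≤ x → x ≤ z → 0 < z → x ^ p ≤ x * z ^ (p - 1) := by
    intro x z hx hxz hz
    rcases eq_or_lt_of_le hx with rfl | hx'
    · simp [Real.zero_rpow hp0.ne']
    · have h1 : x ^ p = x ^ (p - 1) * x := by
        rw [show p = (p - 1) + 1 by ring, Real.rpow_add_one hx'.ne']
        ring_nf
      rw [h1]
      have h2 : x ^ (p - 1) ≤ z ^ (p - 1) :=
        Real.rpow_le_rpow hx'.le hxz (by linarith)
      calc x ^ (p-1) * x ≤ z ^ (p-1) * x := by
            exact mul_le_mul_of_nonneg_right h2 hx'.le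
        _ = x * z ^ (p-1) := by ring
  rcases eq_or_lt_of_le (add_nonneg ha hb) with h0 | hab
  · have hA : a = 0 := by linarith
    have hB : b = 0 := by linarith
    simp [hA, hB, Real.zero_rpow hp0.ne']
  · have h1 : a ^ p ≤ a * (a + b) ^ (p - 1) := key a (a+b) ha (by linarith) hab
    have h2 : b ^ p ≤ b * (a + b) ^ (p - 1) := key b (a+b) hb (by linarith) hab
    have h3 : (a + b) ^ p = (a + b) ^ (p - 1) * (a + b) := by
      rw [show p = (p - 1) + 1 by ring, Real.rpow_add_one hab.ne']
      ring_nf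
    calc a ^ p + b ^ p ≤ a * (a+b) ^ (p-1) + b * (a+b) ^ (p-1) := add_le_add h1 h2
      _ = (a + b) ^ (p - 1) * (a + b) := by ring
      _ = (a + b) ^ p := h3.symm

theorem stmt15 (y g : ℝ → ℝ) (l θ η : ℝ)
    (hl : 1 < l) (hθ : 0 < θ) (hη : 0 ≤ η)
    (hpos : ∀ t, 0 ≤ t → 0 < y t)
    -- `y` is absolutely continuous on `[0, ∞)`:
    (hInt : ∀ t, 0 ≤ t → IntervalIntegrable g volume 0 t)
    (hAC : ∀ t, 0 ≤ t → y t = y 0 + ∫ s in (0 : ℝ)..t, g s)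
    -- `y′ + θ yˡ ≤ η` almost everywhere on `[0, ∞)`:
    (hineq : ∀ᵐ t ∂volume, 0 ≤ t → g t + θ * y t ^ l ≤ η) :
    ∀ t, 0 < t → y t ≤ (η / θ) ^ (1 / l) + (θ * (l - 1) * t) ^ (-(1 / (l - 1))) := by
  intro t0 ht0
  have hl1 : (0:ℝ) < l - 1 := by linarith
  have hl0 : (0:ℝ) < l := by linarith
  set c : ℝ := θ * (l - 1) with hc_def
  have hc : 0 < c := mul_pos hθ hl1
  set p : ℝ := 1 / (l - 1) with hp_def
  have hp : 0 < p := by positivity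
  set K : ℝ := (η / θ) ^ (1 / l) with hK_def
  have hK : 0 ≤ K := Real.rpow_nonneg (div_nonneg hη hθ.le) _
  have hKl : θ * K ^ l = η := by
    rw [hK_def, ← Real.rpow_mul (div_nonneg hη hθ.le), one_div_mul_cancel hl0.ne',
      Real.rpow_one]
    field_simp
  set ψ : ℝ → ℝ := fun s => (c * s) ^ (-p) with hψ_def
  have hψpos : ∀ s, 0 < s → 0 < ψ s := fun s hs =>
    Real.rpow_pos_of_pos (mul_pos hc hs) _
  -- ψ solves ψ' = -θ ψ^l
  have hψd : ∀ s, 0 < s → HasDerivAt ψ (-(θ * ψ s ^ l)) s := by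
    intro s hs
    have hcs : 0 < c * s := mul_pos hc hs
    have h1 : HasDerivAt (fun u : ℝ => c * u) c s := by
      simpa using (hasDerivAt_id s).const_mul c
    have h2 := h1.rpow_const (p := -p) (Or.inl hcs.ne')
    have hexp : (-p) - 1 = -p * l := by
      rw [hp_def]; field_simp; ring
    have hval : ψ s ^ l = (c * s) ^ (-p * l) := by
      rw [hψ_def, ← Real.rpow_mul hcs.le]
    have hcoef : c * -p = -θ := by
      rw [hc_def, hp_def]; field_simp
    convert h2 using 1
    rw [hval, ← hexp]
    rw [hcoef]
    ring
  -- suffices to handle with φ := K + ψ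
  by_contra hcon
  push_neg at hcon
  -- hcon : K + ψ t0 < y t0
  -- continuity of y on [0, t0]
  have hg_int : IntervalIntegrable g volume 0 t0 := hInt t0 ht0.le
  have hycont : ContinuousOn y (Icc 0 t0) := by
    have hIcc : IntegrableOn g (uIcc 0 t0) := by
      rw [uIcc_of_le ht0.le]
      rwa [intervalIntegrable_iff_integrableOn_Icc_of_le ht0.le] at hg_int
    have h := intervalIntegral.continuousOn_primitive_interval hIcc
    rw [uIcc_of_le ht0.le] at h
    exact (continuousOn_const.add h).congr fun s hs => hAC s hs.1
  have hψcont : ∀ b, 0 < b → ContinuousOn ψ (Icc b t0) := by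
    intro b hb
    apply ContinuousOn.rpow_const
    · exact (continuous_const.mul continuous_id).continuousOn
    · intro x hx
      exact Or.inl (mul_pos hc (lt_of_lt_of_le hb hx.1)).ne'
  -- find s0 > 0 with y s0 ≤ K + ψ s0
  obtain ⟨m, hm, hmax⟩ := isCompact_Icc.exists_isMaxOn (nonempty_Icc.2 ht0.le) hycont
  set M : ℝ := max (y m) 1 with hM_def
  have hM : 0 < M := lt_of_lt_of_le one_pos (le_max_right _ _)
  set ε : ℝ := M ^ (-(1/p)) with hε_def
  have hε : 0 < ε := Real.rpow_pos_of_pos hM _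
  set s0 : ℝ := min t0 (ε / c) with hs0_def
  have hs0pos : 0 < s0 := lt_min ht0 (div_pos hε hc)
  have hs0t0 : s0 ≤ t0 := min_le_left _ _
  have hψs0 : M ≤ ψ s0 := by
    have h1 : c * s0 ≤ ε := by
      have : s0 ≤ ε / c := min_le_right _ _
      calc c * s0 ≤ c * (ε / c) := by nlinarith
        _ = ε := by field_simp
    have h2 : ε ^ (-p) ≤ (c * s0) ^ (-p) :=
      Real.rpow_le_rpow_of_nonpos (mul_pos hc hs0pos) h1 (neg_nonpos.2 hp.le)
    have h3 : ε ^ (-p) = M := by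
      rw [hε_def, ← Real.rpow_mul hM.le]
      rw [show -(1/p) * -p = 1 by field_simp]
      exact Real.rpow_one M
    rw [← h3]; exact h2
  have hys0 : y s0 ≤ K + ψ s0 := by
    have h1 : y s0 ≤ y m := hmax ⟨hs0pos.le, hs0t0⟩
    have h2 : y m ≤ M := le_max_left _ _
    linarith
  -- the set S and its supremum a
  set S : Set ℝ := {s ∈ Icc s0 t0 | y s ≤ K + ψ s} with hS_def
  have hS0 : s0 ∈ S := ⟨⟨le_refl _, hs0t0⟩, hys0⟩
  have hSclosed : IsClosed S := by
    have hco : ContinuousOn (fun s => y s - (K + ψ s)) (Icc s0 t0) :=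
      (hycont.mono (Icc_subset_Icc hs0pos.le le_rfl)).sub
        (continuousOn_const.add (hψcont s0 hs0pos))
    have : S = Icc s0 t0 ∩ (fun s => y s - (K + ψ s)) ⁻¹' (Iic 0) := by
      ext x; simp [hS_def, sub_nonpos, and_assoc]
    rw [this]
    exact hco.preimage_isClosed_of_isClosed isClosed_Icc isClosed_Iic
  have hScompact : IsCompact S :=
    isCompact_Icc.of_isClosed_subset hSclosed fun x hx => hx.1
  set a : ℝ := sSup S with ha_def
  have ha_mem : a ∈ S := hScompact.sSup_mem ⟨s0, hS0⟩
  have ha_pos : 0 < a := lt_of_lt_of_le hs0pos ha_mem.1.1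
  have ha_le : a ≤ t0 := ha_mem.1.2
  have ha_lt : a < t0 := by
    rcases lt_or_eq_of_le ha_le with h | h
    · exact h
    · exfalso; have := ha_mem.2; rw [h] at this; linarith
  have hgt : ∀ s, s ∈ Ioc a t0 → K + ψ s ≤ y s := by
    intro s hs
    by_contra h
    push_neg at h
    have hsS : s ∈ S := ⟨⟨le_trans ha_mem.1.1 hs.1.le, hs.2⟩, h.le⟩
    have : s ≤ a := le_csSup hScompact.bddAbove hsS
    linarith [hs.1]
  -- integral identities
  have hgab : IntervalIntegrable g volume a t0 := by
    apply hg_int.mono_set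
    rw [uIcc_of_le ha_le, uIcc_of_le ht0.le]
    exact Icc_subset_Icc ha_pos.le le_rfl
  have hy_eq : y t0 - y a = ∫ s in a..t0, g s := by
    have h1 := hAC t0 ht0.le
    have h2 := hAC a ha_pos.le
    have h3 : (∫ s in (0:ℝ)..a, g s) + ∫ s in a..t0, g s = ∫ s in (0:ℝ)..t0, g s :=
      intervalIntegral.integral_add_adjacent_intervals (hInt a ha_pos.le) hgab
    rw [h1, h2, ← h3]; ring
  have hψl_cont : ContinuousOn (fun s => -(θ * ψ s ^ l)) (uIcc a t0) := by
    rw [uIcc_of_le ha_le]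
    exact (((hψcont a ha_pos).rpow_const fun x hx => Or.inr hl0.le).const_smul θ).neg
  have hψl_int : IntervalIntegrable (fun s => -(θ * ψ s ^ l)) volume a t0 :=
    hψl_cont.intervalIntegrable
  have hψ_eq : ψ t0 - ψ a = ∫ s in a..t0, -(θ * ψ s ^ l) := by
    refine (intervalIntegral.integral_eq_sub_of_hasDerivAt ?_ hψl_int).symm
    intro s hs
    rw [uIcc_of_le ha_le] at hs
    exact hψd s (lt_of_lt_of_le ha_pos hs.1)
  -- a.e. comparison of integrands
  have hae : g ≤ᵐ[volume.restrict (Icc a t0)] fun s => -(θ * ψ s ^ l) := by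
    have h_ne : ∀ᵐ s ∂volume, s ≠ a := by
      rw [ae_iff]
      simpa using measure_singleton a
    filter_upwards [ae_restrict_of_ae hineq, ae_restrict_mem measurableSet_Icc,
      ae_restrict_of_ae h_ne] with s h1 h2 h3
    have hsIoc : s ∈ Ioc a t0 := ⟨lt_of_le_of_ne h2.1 (Ne.symm h3), h2.2⟩
    have hspos : 0 < s := lt_trans ha_pos hsIoc.1
    have hy_ge : K + ψ s ≤ y s := hgt s hsIoc
    have h4 : g s + θ * y s ^ l ≤ η := h1 hspos.le
    have h5 : K ^ l + ψ s ^ l ≤ (K + ψ s) ^ l :=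
      aux_rpow_add hK (hψpos s hspos).le hl.le
    have h6 : (K + ψ s) ^ l ≤ y s ^ l :=
      Real.rpow_le_rpow (by positivity) hy_ge hl0.le
    have h7 : θ * (K ^ l + ψ s ^ l) ≤ θ * y s ^ l :=
      mul_le_mul_of_nonneg_left (le_trans h5 h6) hθ.le
    nlinarith [hKl]
  have hint_le : (∫ s in a..t0, g s) ≤ ∫ s in a..t0, -(θ * ψ s ^ l) :=
    intervalIntegral.integral_mono_ae_restrict ha_le hgab hψl_int hae
  have hfinal : y t0 ≤ K + ψ t0 := by
    have h1 : y t0 - y a ≤ ψ t0 - ψ a := by rw [hy_eq, hψ_eq]; exact hint_le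
    have h2 : y a ≤ K + ψ a := ha_mem.2
    linarith
  linarith
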